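/- Let x₁, …, x_M be M i.i.d. random points sampled from the uniform (equi-)distribution in the unit ball 𝔹ₙ ⊂ ℝⁿ, let 0 < r < 1, and set ρ = √(1 − r²). Then, with probability greater than or equal to 1 − 2M rⁿ − 2M(M − 1) ρⁿ, the points are pairwise ε-orthogonal with ε = r; that is, ‖xⱼ‖ > r for all j and |(xᵢ/‖xᵢ‖, xⱼ/‖xⱼ‖)| ≤ r for all i ≠ j, 1 ≤ i, j ≤ M. -/

import Mathlib

open MeasureTheory ProbabilityTheory RealInnerProductSpace Metric Set ENNReal Pointwise

lemma quasi_cone_vol {n : ℕ} {r : ℝ} (hr : 0 < r) (hr1 : r < 1)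
    (hlam : (max 0 (2 * r ^ 2 - 1)) ^ n ≤ 1 / 2)
    (u : EuclideanSpace ℝ (Fin n)) (hu : ‖u‖ = 1) :
    volume ({y : EuclideanSpace ℝ (Fin n) | r * ‖y‖ < ⟪u, y⟫} ∩ closedBall 0 1)
      ≤ ENNReal.ofReal (2 * Real.sqrt (1 - r ^ 2) ^ n) *
        volume (closedBall (0 : EuclideanSpace ℝ (Fin n)) 1) := by
  set ρ : ℝ := Real.sqrt (1 - r ^ 2) with hρ
  have hρ0 : 0 ≤ ρ := Real.sqrt_nonneg _
  have hρsq : ρ ^ 2 = 1 - r ^ 2 := Real.sq_sqrt (by nlinarith)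
  set l : ℝ := max 0 (2 * r ^ 2 - 1) with hl
  have hl0 : 0 ≤ l := le_max_left _ _
  set S : Set (EuclideanSpace ℝ (Fin n)) :=
    {y : EuclideanSpace ℝ (Fin n) | r * ‖y‖ < ⟪u, y⟫} ∩ closedBall 0 1 with hS
  set κ : ℝ≥0∞ := volume (closedBall (0 : EuclideanSpace ℝ (Fin n)) 1) with hκ
  have hκtop : κ ≠ ⊤ := measure_closedBall_lt_top.ne
  have hsub : S ⊆ (l • S) ∪ closedBall (r • u) ρ := by
    rintro y ⟨hy1, hy2⟩
    rw [mem_setOf_eq] at hy1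
    rw [mem_closedBall_zero_iff] at hy2
    by_cases hc : l ≤ ‖y‖
    · right
      rw [mem_closedBall, dist_eq_norm]
      have hru : ‖r • u‖ = r := by
        rw [norm_smul, hu, mul_one, Real.norm_eq_abs, abs_of_pos hr]
      have hin : ⟪y, r • u⟫ = r * ⟪u, y⟫ := by
        rw [real_inner_smul_right, real_inner_comm]
      have hsq : ‖y - r • u‖ ^ 2 ≤ ρ ^ 2 := by
        rw [norm_sub_sq_real, hin, hru, hρsq]
        have h2r : 2 * r ^ 2 - 1 ≤ ‖y‖ := le_trans (le_max_right _ _) hc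
        nlinarith [mul_pos hr (sub_pos.2 hy1), norm_nonneg y,
          mul_nonneg (sub_nonneg.2 hy2) (sub_nonneg.2 h2r)]
      calc ‖y - r • u‖ = Real.sqrt (‖y - r • u‖ ^ 2) :=
            (Real.sqrt_sq (norm_nonneg _)).symm
        _ ≤ Real.sqrt (ρ ^ 2) := Real.sqrt_le_sqrt hsq
        _ = ρ := Real.sqrt_sq hρ0
    · left
      push_neg at hc
      have hlp : 0 < l := lt_of_le_of_lt (norm_nonneg y) hc
      refine ⟨l⁻¹ • y, ⟨?_, ?_⟩, ?_⟩
      · rw [mem_setOf_eq, real_inner_smul_right, norm_smul, Real.norm_eq_abs,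
          abs_of_pos (inv_pos.2 hlp)]
        rw [show r * (l⁻¹ * ‖y‖) = l⁻¹ * (r * ‖y‖) by ring]
        exact mul_lt_mul_of_pos_left hy1 (inv_pos.2 hlp)
      · rw [mem_closedBall_zero_iff, norm_smul, Real.norm_eq_abs,
          abs_of_pos (inv_pos.2 hlp)]
        calc l⁻¹ * ‖y‖ ≤ l⁻¹ * l := by
              exact mul_le_mul_of_nonneg_left hc.le (inv_nonneg.2 hl0)
          _ = 1 := inv_mul_cancel₀ hlp.ne'
      · show l • (l⁻¹ • y) = y
        rw [smul_smul, mul_inv_cancel₀ hlp.ne', one_smul]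
  have hfr : Module.finrank ℝ (EuclideanSpace ℝ (Fin n)) = n := finrank_euclideanSpace_fin
  have hstep : volume S ≤ ENNReal.ofReal (l ^ n) * volume S + ENNReal.ofReal (ρ ^ n) * κ := by
    calc volume S ≤ volume ((l • S) ∪ closedBall (r • u) ρ) := measure_mono hsub
      _ ≤ volume (l • S) + volume (closedBall (r • u) ρ) := measure_union_le _ _
      _ = ENNReal.ofReal (l ^ n) * volume S + ENNReal.ofReal (ρ ^ n) * κ := by
          rw [Measure.addHaar_smul, Measure.addHaar_closedBall' volume _ hρ0, hfr,
            abs_of_nonneg (pow_nonneg hl0 n)]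
  have hStop : volume S ≠ ⊤ := by
    refine (lt_of_le_of_lt (measure_mono inter_subset_right) ?_).ne
    exact measure_closedBall_lt_top
  have hreal : (volume S).toReal ≤ l ^ n * (volume S).toReal + ρ ^ n * κ.toReal := by
    have hfin : ENNReal.ofReal (l ^ n) * volume S + ENNReal.ofReal (ρ ^ n) * κ ≠ ⊤ := by
      finiteness
    have := ENNReal.toReal_mono hfin hstep
    rwa [ENNReal.toReal_add (by finiteness) (by finiteness), ENNReal.toReal_mul,
      ENNReal.toReal_mul, ENNReal.toReal_ofReal (pow_nonneg hl0 n),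
      ENNReal.toReal_ofReal (pow_nonneg hρ0 n)] at this
  have hVr : (volume S).toReal ≤ 2 * ρ ^ n * κ.toReal := by
    have h1 : l ^ n * (volume S).toReal ≤ (1 / 2) * (volume S).toReal :=
      mul_le_mul_of_nonneg_right hlam ENNReal.toReal_nonneg
    linarith
  calc volume S = ENNReal.ofReal ((volume S).toReal) := (ENNReal.ofReal_toReal hStop).symm
    _ ≤ ENNReal.ofReal (2 * ρ ^ n * κ.toReal) := ENNReal.ofReal_le_ofReal hVr
    _ = ENNReal.ofReal (2 * ρ ^ n) * κ := by
        rw [ENNReal.ofReal_mul (by positivity), ENNReal.ofReal_toReal hκtop]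

lemma quasi_dir_vol {n : ℕ} {r : ℝ} (hr : 0 < r) (hr1 : r < 1)
    (hlam : (max 0 (2 * r ^ 2 - 1)) ^ n ≤ 1 / 2)
    (u : EuclideanSpace ℝ (Fin n)) (hu : ‖u‖ = 1 ∨ u = 0) :
    volume ({y : EuclideanSpace ℝ (Fin n) | r < |⟪u, ‖y‖⁻¹ • y⟫|} ∩ closedBall 0 1)
      ≤ ENNReal.ofReal (4 * Real.sqrt (1 - r ^ 2) ^ n) *
        volume (closedBall (0 : EuclideanSpace ℝ (Fin n)) 1) := by
  set ρ : ℝ := Real.sqrt (1 - r ^ 2) with hρ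
  have hρ0 : 0 ≤ ρ := Real.sqrt_nonneg _
  rcases hu with hu | rfl
  · have hsub : {y : EuclideanSpace ℝ (Fin n) | r < |⟪u, ‖y‖⁻¹ • y⟫|} ∩ closedBall 0 1 ⊆
        ({y : EuclideanSpace ℝ (Fin n) | r * ‖y‖ < ⟪u, y⟫} ∩ closedBall 0 1) ∪
        ({y : EuclideanSpace ℝ (Fin n) | r * ‖y‖ < ⟪-u, y⟫} ∩ closedBall 0 1) := by
      rintro y ⟨hy1, hy2⟩
      rw [mem_setOf_eq] at hy1
      by_cases hy0 : y = 0
      · exfalso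
        rw [hy0, smul_zero, inner_zero_right, abs_zero] at hy1
        exact absurd hy1 (not_lt.2 hr.le)
      have hny : 0 < ‖y‖ := norm_pos_iff.2 hy0
      have key : r * ‖y‖ < |⟪u, y⟫| := by
        rw [real_inner_smul_right, abs_mul, abs_of_pos (inv_pos.2 hny)] at hy1
        calc r * ‖y‖ < (‖y‖⁻¹ * |⟪u, y⟫|) * ‖y‖ := mul_lt_mul_of_pos_right hy1 hny
          _ = |⟪u, y⟫| := by field_simp
      rcases lt_abs.mp key with h | h
      · exact Or.inl ⟨h, hy2⟩
      · refine Or.inr ⟨?_, hy2⟩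
        rw [mem_setOf_eq, inner_neg_left]
        linarith
    calc volume _ ≤ _ := measure_mono hsub
      _ ≤ volume ({y : EuclideanSpace ℝ (Fin n) | r * ‖y‖ < ⟪u, y⟫} ∩ closedBall 0 1) +
          volume ({y : EuclideanSpace ℝ (Fin n) | r * ‖y‖ < ⟪-u, y⟫} ∩ closedBall 0 1) :=
        measure_union_le _ _
      _ ≤ ENNReal.ofReal (2 * ρ ^ n) * volume (closedBall (0 : EuclideanSpace ℝ (Fin n)) 1) +
          ENNReal.ofReal (2 * ρ ^ n) * volume (closedBall (0 : EuclideanSpace ℝ (Fin n)) 1) :=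
        add_le_add (quasi_cone_vol hr hr1 hlam u hu)
          (quasi_cone_vol hr hr1 hlam (-u) (by rw [norm_neg, hu]))
      _ = ENNReal.ofReal (4 * ρ ^ n) * volume (closedBall (0 : EuclideanSpace ℝ (Fin n)) 1) := by
        rw [← add_mul, ← ENNReal.ofReal_add (by positivity) (by positivity)]
        ring_nf
  · have : {y : EuclideanSpace ℝ (Fin n) | r < |⟪(0 : EuclideanSpace ℝ (Fin n)), ‖y‖⁻¹ • y⟫|} = ∅ := by
      ext y
      simp [inner_zero_left, not_lt.2 hr.le]
    rw [this, empty_inter, measure_empty]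
    exact zero_le

lemma quasi_abs_lt_measurable {α : Type*} [MeasurableSpace α] {g : α → ℝ}
    (hg : Measurable g) (r : ℝ) : MeasurableSet {a | r < |g a|} := by
  have : {a | r < |g a|} = {a | r < g a} ∪ {a | r < -g a} := by
    ext a; simp [lt_abs]
  rw [this]
  exact (measurableSet_lt measurable_const hg).union
    (measurableSet_lt measurable_const hg.neg)

/-- Quasiorthogonality: `M` i.i.d. points uniform in the unit ball are pairwise
`ε`-orthogonal with `ε = r` (i.e. `|⟪xᵢ/‖xᵢ‖, xⱼ/‖xⱼ‖⟫| ≤ r` for all `i ≠ j`, and all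
norms exceed `r`) with probability at least `1 - 2M rⁿ - 2M(M-1) ρⁿ`, `ρ = √(1-r²)`. -/
theorem quasiorthogonality_random_points_ball
    (n M : ℕ) (hn : 0 < n) (hM : 0 < M)
    (r ρ : ℝ) (hr : 0 < r) (hr1 : r < 1) (hρ : ρ = Real.sqrt (1 - r ^ 2))
    (Ω : Type*) [MeasurableSpace Ω] (P : Measure Ω) [IsProbabilityMeasure P]
    (X : Fin M → Ω → EuclideanSpace ℝ (Fin n))
    (hmeas : ∀ i, Measurable (X i))
    (hindep : iIndepFun X P)
    (hdist : ∀ i, Measure.map (X i) P =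
      (volume (Metric.closedBall (0 : EuclideanSpace ℝ (Fin n)) 1))⁻¹ •
        volume.restrict (Metric.closedBall (0 : EuclideanSpace ℝ (Fin n)) 1)) :
    (P {ω | (∀ j : Fin M, ‖X j ω‖ > r) ∧
        ∀ i j : Fin M, i ≠ j →
          |⟪‖X i ω‖⁻¹ • X i ω, ‖X j ω‖⁻¹ • X j ω⟫| ≤ r}).toReal ≥
      1 - 2 * (M : ℝ) * r ^ n - 2 * (M : ℝ) * ((M : ℝ) - 1) * ρ ^ n := by
  have hρ0 : 0 ≤ ρ := hρ ▸ Real.sqrt_nonneg _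
  have hM1 : (1 : ℝ) ≤ (M : ℝ) := by exact_mod_cast hM
  by_cases hlam : (max 0 (2 * r ^ 2 - 1)) ^ n ≤ 1 / 2
  · -- main case
    set κ : ℝ≥0∞ := volume (closedBall (0 : EuclideanSpace ℝ (Fin n)) 1) with hκ
    have hκ0 : κ ≠ 0 := (measure_closedBall_pos volume 0 one_pos).ne'
    have hκtop : κ ≠ ⊤ := measure_closedBall_lt_top.ne
    set μ : Measure (EuclideanSpace ℝ (Fin n)) := κ⁻¹ • volume.restrict (closedBall 0 1) with hμ
    have hμ1 : μ Set.univ = 1 := by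
      rw [hμ, Measure.smul_apply, smul_eq_mul, Measure.restrict_apply MeasurableSet.univ,
        univ_inter]
      exact ENNReal.inv_mul_cancel hκ0 hκtop
    have hfm : Measurable (fun x : EuclideanSpace ℝ (Fin n) => ‖x‖⁻¹ • x) :=
      Measurable.smul measurable_norm.inv measurable_id
    -- norm events
    have hNorm : ∀ j, P {ω | ‖X j ω‖ ≤ r} ≤ ENNReal.ofReal (r ^ n) := by
      intro j
      have hpre : {ω | ‖X j ω‖ ≤ r} = X j ⁻¹' (closedBall 0 r) := by
        ext ω; simp [mem_closedBall_zero_iff]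
      rw [hpre, ← Measure.map_apply (hmeas j) measurableSet_closedBall, hdist j,
        Measure.smul_apply, smul_eq_mul, Measure.restrict_apply measurableSet_closedBall,
        inter_eq_self_of_subset_left (closedBall_subset_closedBall hr1.le),
        Measure.addHaar_closedBall' volume _ hr.le, finrank_euclideanSpace_fin]
      refine le_of_eq ?_
      calc κ⁻¹ * (ENNReal.ofReal (r ^ n) * κ) = ENNReal.ofReal (r ^ n) * (κ⁻¹ * κ) := by ring
        _ = ENNReal.ofReal (r ^ n) := by rw [ENNReal.inv_mul_cancel hκ0 hκtop, mul_one]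
    -- pair events
    have hPair : ∀ i j : Fin M, i ≠ j →
        P {ω | r < |⟪‖X i ω‖⁻¹ • X i ω, ‖X j ω‖⁻¹ • X j ω⟫|} ≤ ENNReal.ofReal (4 * ρ ^ n) := by
      intro i j hij
      set f : EuclideanSpace ℝ (Fin n) → EuclideanSpace ℝ (Fin n) :=
        fun x => ‖x‖⁻¹ • x with hf
      have hBm : MeasurableSet {p : EuclideanSpace ℝ (Fin n) × EuclideanSpace ℝ (Fin n) |
          r < |⟪f p.1, f p.2⟫|} :=
        quasi_abs_lt_measurable ((hfm.comp measurable_fst).inner (hfm.comp measurable_snd)) r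
      have hmap : Measure.map (fun ω => (X i ω, X j ω)) P = μ.prod μ := by
        rw [(indepFun_iff_map_prod_eq_prod_map_map (hmeas i).aemeasurable
          (hmeas j).aemeasurable).mp (hindep.indepFun hij), hdist i, hdist j]
      have hslice : ∀ x : EuclideanSpace ℝ (Fin n),
          μ {y | r < |⟪f x, f y⟫|} ≤ ENNReal.ofReal (4 * ρ ^ n) := by
        intro x
        have hsm : MeasurableSet {y : EuclideanSpace ℝ (Fin n) | r < |⟪f x, f y⟫|} :=
          quasi_abs_lt_measurable (Measurable.inner measurable_const hfm) r
        have hu : ‖f x‖ = 1 ∨ f x = 0 := by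
          by_cases hx : x = 0
          · right; rw [hf]; simp [hx]
          · left; exact norm_smul_inv_norm hx
        have hv := quasi_dir_vol hr hr1 hlam (f x) hu
        rw [← hρ, ← hκ] at hv
        rw [hμ, Measure.smul_apply, smul_eq_mul, Measure.restrict_apply hsm]
        calc κ⁻¹ * volume ({y : EuclideanSpace ℝ (Fin n) | r < |⟪f x, f y⟫|} ∩ closedBall 0 1)
            ≤ κ⁻¹ * (ENNReal.ofReal (4 * ρ ^ n) * κ) := mul_le_mul_right hv _
          _ = ENNReal.ofReal (4 * ρ ^ n) * (κ⁻¹ * κ) := by ring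
          _ = ENNReal.ofReal (4 * ρ ^ n) := by
              rw [ENNReal.inv_mul_cancel hκ0 hκtop, mul_one]
      calc P {ω | r < |⟪f (X i ω), f (X j ω)⟫|}
          = Measure.map (fun ω => (X i ω, X j ω)) P
            {p : EuclideanSpace ℝ (Fin n) × EuclideanSpace ℝ (Fin n) | r < |⟪f p.1, f p.2⟫|} :=
            (Measure.map_apply ((hmeas i).prodMk (hmeas j)) hBm).symm
        _ = (μ.prod μ) {p : EuclideanSpace ℝ (Fin n) × EuclideanSpace ℝ (Fin n) |
              r < |⟪f p.1, f p.2⟫|} := by rw [hmap]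
        _ = ∫⁻ x, μ (Prod.mk x ⁻¹' {p : EuclideanSpace ℝ (Fin n) × EuclideanSpace ℝ (Fin n) |
              r < |⟪f p.1, f p.2⟫|}) ∂μ := Measure.prod_apply hBm
        _ ≤ ∫⁻ _, ENNReal.ofReal (4 * ρ ^ n) ∂μ := lintegral_mono fun x => hslice x
        _ = ENNReal.ofReal (4 * ρ ^ n) := by rw [lintegral_const, hμ1, mul_one]
    -- measurability of the good event
    have hGm : MeasurableSet {ω | (∀ j : Fin M, ‖X j ω‖ > r) ∧
        ∀ i j : Fin M, i ≠ j →
          |⟪‖X i ω‖⁻¹ • X i ω, ‖X j ω‖⁻¹ • X j ω⟫| ≤ r} := by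
      rw [setOf_and]
      refine MeasurableSet.inter ?_ ?_
      · rw [setOf_forall]
        exact MeasurableSet.iInter fun j =>
          measurableSet_lt measurable_const (hmeas j).norm
      · rw [setOf_forall]
        refine MeasurableSet.iInter fun i => ?_
        rw [setOf_forall]
        refine MeasurableSet.iInter fun j => ?_
        by_cases hij : i = j
        · simp [hij]
        · have : {ω | i ≠ j → |⟪‖X i ω‖⁻¹ • X i ω, ‖X j ω‖⁻¹ • X j ω⟫| ≤ r}
              = {ω | r < |⟪‖X i ω‖⁻¹ • X i ω, ‖X j ω‖⁻¹ • X j ω⟫|}ᶜ := by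
            ext ω; simp [hij, not_lt]
          rw [this]
          refine MeasurableSet.compl ?_
          exact quasi_abs_lt_measurable
            (Measurable.inner (hfm.comp (hmeas i)) (hfm.comp (hmeas j))) r
    -- pairs and counting
    set pairs : Finset (Fin M × Fin M) :=
      Finset.univ.filter (fun p => p.1 < p.2) with hpairs
    have hcard : 2 * pairs.card + M ≤ M * M := by
      set gts : Finset (Fin M × Fin M) :=
        Finset.univ.filter (fun p => p.2 < p.1) with hgts
      have hswap : pairs.card = gts.card := by
        apply Finset.card_bij (fun p _ => Prod.swap p)
        · intro p hp
          simp only [hpairs, hgts, Finset.mem_filter, Finset.mem_univ, true_and] at hp ⊢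
          exact hp
        · intro a _ b _ h
          exact Prod.swap_injective h
        · intro b hb
          refine ⟨Prod.swap b, ?_, by simp⟩
          simp only [hpairs, hgts, Finset.mem_filter, Finset.mem_univ, true_and] at hb ⊢
          exact hb
      have hdisj : Disjoint pairs gts := by
        rw [Finset.disjoint_left]
        intro p hp hq
        simp only [hpairs, hgts, Finset.mem_filter, Finset.mem_univ, true_and] at hp hq
        exact absurd hq (lt_asymm hp)
      have huni : pairs ∪ gts = (Finset.univ : Finset (Fin M)).offDiag := by
        ext p
        simp only [hpairs, hgts, Finset.mem_union, Finset.mem_filter, Finset.mem_univ,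
          true_and, Finset.mem_offDiag, ne_iff_lt_or_gt]
      have hcc : pairs.card + gts.card = M * M - M := by
        rw [← Finset.card_union_of_disjoint hdisj, huni, Finset.offDiag_card,
          Finset.card_univ, Fintype.card_fin]
      have hMM : M ≤ M * M := Nat.le_mul_of_pos_left M hM
      omega
    -- complement subset
    have hsub : {ω | (∀ j : Fin M, ‖X j ω‖ > r) ∧
        ∀ i j : Fin M, i ≠ j →
          |⟪‖X i ω‖⁻¹ • X i ω, ‖X j ω‖⁻¹ • X j ω⟫| ≤ r}ᶜ ⊆
        (⋃ j : Fin M, {ω | ‖X j ω‖ ≤ r}) ∪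
        (⋃ p ∈ pairs, {ω | r < |⟪‖X p.1 ω‖⁻¹ • X p.1 ω, ‖X p.2 ω‖⁻¹ • X p.2 ω⟫|}) := by
      intro ω hω
      rw [mem_compl_iff, mem_setOf_eq, not_and_or] at hω
      rcases hω with h | h
      · push_neg at h
        obtain ⟨j, hj⟩ := h
        exact Or.inl (mem_iUnion.2 ⟨j, hj⟩)
      · push_neg at h
        obtain ⟨i, j, hij, hgt⟩ := h
        refine Or.inr (mem_iUnion₂.2 ?_)
        rcases hij.lt_or_gt with hlt | hlt
        · refine ⟨(i, j), ?_, hgt⟩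
          simp only [hpairs, Finset.mem_filter, Finset.mem_univ, true_and]
          exact hlt
        · refine ⟨(j, i), ?_, ?_⟩
          · simp only [hpairs, Finset.mem_filter, Finset.mem_univ, true_and]
            exact hlt
          · rw [mem_setOf_eq, real_inner_comm]
            exact hgt
    -- union bound
    have hPGc : P {ω | (∀ j : Fin M, ‖X j ω‖ > r) ∧
        ∀ i j : Fin M, i ≠ j →
          |⟪‖X i ω‖⁻¹ • X i ω, ‖X j ω‖⁻¹ • X j ω⟫| ≤ r}ᶜ ≤
        (M : ℝ≥0∞) * ENNReal.ofReal (r ^ n) +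
        (pairs.card : ℝ≥0∞) * ENNReal.ofReal (4 * ρ ^ n) := by
      refine le_trans (measure_mono hsub) (le_trans (measure_union_le _ _) (add_le_add ?_ ?_))
      · refine le_trans (measure_iUnion_le _) ?_
        rw [tsum_fintype]
        calc ∑ j : Fin M, P {ω | ‖X j ω‖ ≤ r}
            ≤ ∑ _j : Fin M, ENNReal.ofReal (r ^ n) := Finset.sum_le_sum fun j _ => hNorm j
          _ = (M : ℝ≥0∞) * ENNReal.ofReal (r ^ n) := by
              rw [Finset.sum_const, Finset.card_univ, Fintype.card_fin, nsmul_eq_mul]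
      · refine le_trans (measure_biUnion_finset_le _ _) ?_
        calc ∑ p ∈ pairs, P {ω | r < |⟪‖X p.1 ω‖⁻¹ • X p.1 ω, ‖X p.2 ω‖⁻¹ • X p.2 ω⟫|}
            ≤ ∑ _p ∈ pairs, ENNReal.ofReal (4 * ρ ^ n) :=
              Finset.sum_le_sum fun p hp => by
                refine hPair p.1 p.2 ?_
                have := Finset.mem_filter.mp (hpairs ▸ hp)
                exact ne_of_lt this.2
          _ = (pairs.card : ℝ≥0∞) * ENNReal.ofReal (4 * ρ ^ n) := by
              rw [Finset.sum_const, nsmul_eq_mul]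
    -- conclude
    have hsum := measure_add_measure_compl (μ := P) hGm
    have htr : (P {ω | (∀ j : Fin M, ‖X j ω‖ > r) ∧
        ∀ i j : Fin M, i ≠ j →
          |⟪‖X i ω‖⁻¹ • X i ω, ‖X j ω‖⁻¹ • X j ω⟫| ≤ r}).toReal +
        (P {ω | (∀ j : Fin M, ‖X j ω‖ > r) ∧
        ∀ i j : Fin M, i ≠ j →
          |⟪‖X i ω‖⁻¹ • X i ω, ‖X j ω‖⁻¹ • X j ω⟫| ≤ r}ᶜ).toReal = 1 := by
      rw [← ENNReal.toReal_add (measure_ne_top P _) (measure_ne_top P _), hsum,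
        measure_univ, ENNReal.toReal_one]
    have hGcr : (P {ω | (∀ j : Fin M, ‖X j ω‖ > r) ∧
        ∀ i j : Fin M, i ≠ j →
          |⟪‖X i ω‖⁻¹ • X i ω, ‖X j ω‖⁻¹ • X j ω⟫| ≤ r}ᶜ).toReal ≤
        (M : ℝ) * r ^ n + (pairs.card : ℝ) * (4 * ρ ^ n) := by
      have := ENNReal.toReal_mono (by finiteness) hPGc
      rwa [ENNReal.toReal_add (by finiteness) (by finiteness), ENNReal.toReal_mul,
        ENNReal.toReal_mul, ENNReal.toReal_natCast, ENNReal.toReal_natCast,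
        ENNReal.toReal_ofReal (by positivity), ENNReal.toReal_ofReal (by positivity)] at this
    have hcR : 2 * (pairs.card : ℝ) + (M : ℝ) ≤ (M : ℝ) * M := by exact_mod_cast hcard
    have hrn : (0:ℝ) ≤ r ^ n := by positivity
    have hρn : (0:ℝ) ≤ ρ ^ n := by positivity
    have hMr : (0:ℝ) ≤ (M : ℝ) := Nat.cast_nonneg M
    nlinarith [hGcr, htr, mul_nonneg hMr hrn]
  · -- trivial case : RHS ≤ 0
    push_neg at hlam
    have hl2 : max 0 (2 * r ^ 2 - 1) ≤ r ^ 2 := by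
      apply max_le (by positivity); nlinarith
    have h2 : (1:ℝ) / 2 < (r ^ 2) ^ n :=
      lt_of_lt_of_le hlam (pow_le_pow_left₀ (le_max_left _ _) hl2 n)
    have h3 : (r ^ 2) ^ n ≤ r ^ n := by
      rw [← pow_mul]
      exact pow_le_pow_of_le_one hr.le hr1.le (by omega)
    have : 1 - 2 * (M : ℝ) * r ^ n - 2 * (M : ℝ) * ((M : ℝ) - 1) * ρ ^ n ≤ 0 := by
      have hρn : 0 ≤ ρ ^ n := pow_nonneg hρ0 n
      nlinarith [mul_nonneg (mul_nonneg (by linarith : (0:ℝ) ≤ 2 * (M:ℝ)) (by linarith : (0:ℝ) ≤ (M:ℝ) - 1)) hρn]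
    exact le_trans this ENNReal.toReal_nonneg
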